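/- Let P be a real symmetric positive definite n×n matrix, H a real p×n matrix of rank p (1 ≤ p ≤ n), and Q a real symmetric positive definite p×p matrix, and set P_mod := P + Hᵀ·(Q − (H·P⁻¹·Hᵀ)⁻¹)·H. Then P_mod·P⁻¹·Hᵀ = Hᵀ·Q·(H·P⁻¹·Hᵀ), and consequently the column space of P_mod⁻¹·Hᵀ equals the column space of P⁻¹·Hᵀ. -/

import Mathlib

open Matrix

/-- For `P` symmetric positive definite, `H` of rank `p`, `Q` symmetric positive definite, and
`P_mod := P + Hᵀ·(Q − (H·P⁻¹·Hᵀ)⁻¹)·H`, one has `P_mod·P⁻¹·Hᵀ = Hᵀ·Q·(H·P⁻¹·Hᵀ)`, and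
consequently the column space of `P_mod⁻¹·Hᵀ` equals the column space of `P⁻¹·Hᵀ`. -/
theorem stmt_5 {n p : ℕ} (hp1 : 1 ≤ p) (hpn : p ≤ n)
    (P : Matrix (Fin n) (Fin n) ℝ) (hPsym : P.IsSymm) (hP : P.PosDef)
    (H : Matrix (Fin p) (Fin n) ℝ) (hH : H.rank = p)
    (Q : Matrix (Fin p) (Fin p) ℝ) (hQsym : Q.IsSymm) (hQ : Q.PosDef) :
    (P + Hᵀ * (Q - (H * P⁻¹ * Hᵀ)⁻¹) * H) * P⁻¹ * Hᵀ = Hᵀ * Q * (H * P⁻¹ * Hᵀ) ∧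
      LinearMap.range ((P + Hᵀ * (Q - (H * P⁻¹ * Hᵀ)⁻¹) * H)⁻¹ * Hᵀ).mulVecLin
        = LinearMap.range (P⁻¹ * Hᵀ).mulVecLin := by
  classical
  set S := H * P⁻¹ * Hᵀ with hSdef
  -- injectivity of Hᵀ as a linear map
  have hinj : Function.Injective Hᵀ.mulVecLin := by
    rw [← LinearMap.ker_eq_bot]
    have hr : Hᵀ.rank = p := by rw [H.rank_transpose, hH]
    rw [Matrix.rank] at hr
    have h1 := LinearMap.finrank_range_add_finrank_ker Hᵀ.mulVecLin
    rw [hr] at h1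
    simp only [Module.finrank_pi, Fintype.card_fin] at h1
    have h0 : Module.finrank ℝ (LinearMap.ker Hᵀ.mulVecLin) = 0 := by omega
    exact Submodule.finrank_eq_zero.mp h0
  have hPinv : P⁻¹.PosDef := hP.inv
  have hHH : H = (Hᵀ)ᴴ := by
    rw [conjTranspose_eq_transpose_of_trivial, transpose_transpose]
  -- S is positive definite
  have hS : S.PosDef := by
    refine posDef_iff_dotProduct_mulVec.mpr ⟨?_, ?_⟩
    · rw [hSdef, hHH]
      exact isHermitian_conjTranspose_mul_mul Hᵀ hPinv.1
    · intro x hx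
      have hHx : Hᵀ *ᵥ x ≠ 0 := by
        intro h
        exact hx (hinj (by rw [mulVecLin_apply, mulVecLin_apply, h, mulVec_zero]))
      have := hPinv.dotProduct_mulVec_pos hHx
      rw [hSdef, hHH]
      simpa only [star_mulVec, dotProduct_mulVec, vecMul_vecMul,
        conjTranspose_eq_transpose_of_trivial, transpose_transpose] using this
  -- invertibility facts
  have hPdet : IsUnit P.det := isUnit_iff_ne_zero.mpr hP.det_pos.ne'
  have hSdet : IsUnit S.det := isUnit_iff_ne_zero.mpr hS.det_pos.ne'
  have hQdet : IsUnit Q.det := isUnit_iff_ne_zero.mpr hQ.det_pos.ne'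
  have hPP : P * P⁻¹ = 1 := mul_nonsing_inv P hPdet
  have hPiP : P⁻¹ * P = 1 := nonsing_inv_mul P hPdet
  have hSiS : S⁻¹ * S = 1 := nonsing_inv_mul S hSdet
  -- symmetry of the inverses
  have hPisym : (P⁻¹)ᵀ = P⁻¹ := by
    rw [← conjTranspose_eq_transpose_of_trivial]; exact hPinv.1
  have hSisym : (S⁻¹)ᵀ = S⁻¹ := by
    rw [← conjTranspose_eq_transpose_of_trivial]; exact hS.inv.1
  -- rewriting helpers
  have h1 : ∀ (k : ℕ) (X : Matrix (Fin n) (Fin k) ℝ), P⁻¹ * (P * X) = X := by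
    intro k X; rw [← Matrix.mul_assoc, hPiP, Matrix.one_mul]
  have h1' : ∀ (k : ℕ) (X : Matrix (Fin n) (Fin k) ℝ), P * (P⁻¹ * X) = X := by
    intro k X; rw [← Matrix.mul_assoc, hPP, Matrix.one_mul]
  have h2 : ∀ (k : ℕ) (X : Matrix (Fin p) (Fin k) ℝ), H * (P⁻¹ * (Hᵀ * X)) = S * X := by
    intro k X; rw [← Matrix.mul_assoc, ← Matrix.mul_assoc, ← hSdef]
  have h3 : ∀ (k : ℕ) (X : Matrix (Fin p) (Fin k) ℝ), S⁻¹ * (S * X) = X := by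
    intro k X; rw [← Matrix.mul_assoc, hSiS, Matrix.one_mul]
  have h4 : H * (P⁻¹ * Hᵀ) = S := by rw [← Matrix.mul_assoc]
  -- the first identity
  have eq1 : (P + Hᵀ * (Q - S⁻¹) * H) * P⁻¹ * Hᵀ = Hᵀ * Q * S := by
    simp only [Matrix.sub_mul, Matrix.mul_sub, Matrix.one_mul, Matrix.mul_one,
      Matrix.add_mul, Matrix.mul_add, Matrix.mul_assoc, h1, h1', h2, h3, h4, hSiS,
      hPP, hPiP]
    abel
  -- the key decomposition P_mod = Mᵀ P M + Hᵀ Q H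
  set M : Matrix (Fin n) (Fin n) ℝ := 1 - P⁻¹ * Hᵀ * S⁻¹ * H with hMdef
  have hMt : Mᵀ = 1 - Hᵀ * S⁻¹ * H * P⁻¹ := by
    rw [hMdef]
    simp only [transpose_sub, transpose_one, transpose_mul, transpose_transpose,
      hPisym, hSisym, Matrix.mul_assoc]
  have hMH : Mᴴ = Mᵀ := conjTranspose_eq_transpose_of_trivial M
  have key : P + Hᵀ * (Q - S⁻¹) * H = Mᵀ * P * M + Hᵀ * Q * H := by
    rw [hMt, hMdef]
    simp only [Matrix.sub_mul, Matrix.mul_sub, Matrix.one_mul, Matrix.mul_one,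
      Matrix.add_mul, Matrix.mul_add, Matrix.mul_assoc, h1, h1', h2, h3, hPP, hPiP]
    abel
  -- P_mod is positive definite
  have hPmod : (P + Hᵀ * (Q - S⁻¹) * H).PosDef := by
    rw [key]
    refine posDef_iff_dotProduct_mulVec.mpr ⟨?_, ?_⟩
    · refine IsHermitian.add ?_ ?_
      · rw [← hMH]; exact isHermitian_conjTranspose_mul_mul M hP.1
      · rw [hHH]; exact isHermitian_conjTranspose_mul_mul H hQ.1
    · intro x hx
      rw [add_mulVec, dotProduct_add]
      have ea : star x ⬝ᵥ ((Mᵀ * P * M) *ᵥ x) = star (M *ᵥ x) ⬝ᵥ (P *ᵥ (M *ᵥ x)) := by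
        rw [← hMH]
        rw [star_mulVec, dotProduct_mulVec, dotProduct_mulVec, dotProduct_mulVec,
          vecMul_vecMul, vecMul_vecMul, Matrix.mul_assoc]
      have eb : star x ⬝ᵥ ((Hᵀ * Q * H) *ᵥ x) = star (H *ᵥ x) ⬝ᵥ (Q *ᵥ (H *ᵥ x)) := by
        rw [star_mulVec, dotProduct_mulVec, dotProduct_mulVec, dotProduct_mulVec,
          vecMul_vecMul, vecMul_vecMul, conjTranspose_eq_transpose_of_trivial,
          Matrix.mul_assoc]
      by_cases hHx : H *ᵥ x = 0
      · have hMx : M *ᵥ x = x := by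
          rw [hMdef, sub_mulVec, one_mulVec, Matrix.mul_assoc, Matrix.mul_assoc,
            ← mulVec_mulVec, ← mulVec_mulVec, ← mulVec_mulVec, hHx]
          simp
        have hb : star x ⬝ᵥ ((Hᵀ * Q * H) *ᵥ x) = 0 := by
          rw [eb, hHx]; simp
        have ha : 0 < star x ⬝ᵥ ((Mᵀ * P * M) *ᵥ x) := by
          rw [ea, hMx]; exact hP.dotProduct_mulVec_pos hx
        linarith
      · have ha : 0 ≤ star x ⬝ᵥ ((Mᵀ * P * M) *ᵥ x) := by
          rw [ea]; exact hP.posSemidef.dotProduct_mulVec_nonneg (M *ᵥ x)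
        have hb : 0 < star x ⬝ᵥ ((Hᵀ * Q * H) *ᵥ x) := by
          rw [eb]; exact hQ.dotProduct_mulVec_pos hHx
        linarith
  have hPmdet : IsUnit (P + Hᵀ * (Q - S⁻¹) * H).det :=
    isUnit_iff_ne_zero.mpr hPmod.det_pos.ne'
  refine ⟨eq1, ?_⟩
  -- range equality
  have hQSdet : IsUnit (Q * S).det := by rw [det_mul]; exact hQdet.mul hSdet
  have e2 : P⁻¹ * Hᵀ = (P + Hᵀ * (Q - S⁻¹) * H)⁻¹ * (Hᵀ * Q * S) := by
    have h := congrArg (fun X => (P + Hᵀ * (Q - S⁻¹) * H)⁻¹ * X) eq1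
    rw [← h, ← Matrix.mul_assoc, ← Matrix.mul_assoc, nonsing_inv_mul _ hPmdet,
      Matrix.one_mul]
  have e2' : P⁻¹ * Hᵀ = (P + Hᵀ * (Q - S⁻¹) * H)⁻¹ * Hᵀ * (Q * S) := by
    rw [e2, Matrix.mul_assoc Hᵀ Q S, ← Matrix.mul_assoc]
  have e3 : (P + Hᵀ * (Q - S⁻¹) * H)⁻¹ * Hᵀ = P⁻¹ * Hᵀ * (Q * S)⁻¹ := by
    rw [e2', Matrix.mul_assoc _ (Q * S) (Q * S)⁻¹, mul_nonsing_inv _ hQSdet, Matrix.mul_one]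
  apply le_antisymm
  · rw [e3, mulVecLin_mul]
    exact LinearMap.range_comp_le_range _ _
  · rw [e2', mulVecLin_mul]
    exact LinearMap.range_comp_le_range _ _
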